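/- Let U_b^N be the set of lattices L ⊆ K^m such that L_0 ⊆ L, dim_ℂ L/L_0 = N, and π_b restricts to a bijection L → L_b. Then every L ∈ U_b^N has the form L = (1 + f)(L_b) for a unique ℂ-linear map f : L_b → L_b^− with L_0 ⊆ ker f. Moreover, writing f(u) = Σ_{k≥1} z^{−k} · ι(f_k(ū)) for linear maps f_k : D → V_b (where ū ∈ D is the class of u ∈ L_b, ι : V_b ↪ K^m is the inclusion, and z^{−k}· denotes multiplication by z^{−k} in K^m), one has: (i) f_k = f_1 ∘ (z̄ + f̂_1)^{k−1} for all k ≥ 1; (ii) the operator z̄ + f̂_1 ∈ End(D) is nilpotent; and (iii) the isomorphism induced by π_b intertwines the operator induced by multiplication by z on L/L_0 with the operator z̄ + f̂_1 on L_b/L_0 = D. -/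

import Mathlib

set_option synthInstance.maxHeartbeats 400000
set_option maxHeartbeats 1000000

namespace GrassA

noncomputable section

/-- `K = ℂ((z))`, the field of formal Laurent series. -/
abbrev K : Type := LaurentSeries ℂ

/-- `z ∈ K`. -/
def zK : K := HahnSeries.single (1 : ℤ) (1 : ℂ)

variable (m : ℕ) (b : Fin m → ℕ)

/-- `K^m`. -/
abbrev Km : Type := Fin m → K

/-- `L_0 = O^m ⊆ K^m`: vectors whose coordinates are power series. -/
def L0 : Submodule ℂ (Km m) where
  carrier := {v | ∀ (i : Fin m) (d : ℤ), d < 0 → (v i).coeff d = 0}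
  add_mem' := by
    intro u v hu hv i d hd
    simp [HahnSeries.coeff_add, hu i d hd, hv i d hd]
  zero_mem' := by intro i d _; rfl
  smul_mem' := by
    intro r v hv i d hd
    simp [HahnSeries.coeff_smul, hv i d hd]

/-- `L_b = ⊕_i O·z^{−b_i} e_i ⊆ K^m`: vectors whose `i`-th coordinate lies in
`z^{−b_i}·O`. -/
def Lb : Submodule ℂ (Km m) where
  carrier := {v | ∀ (i : Fin m) (d : ℤ), d < -(b i : ℤ) → (v i).coeff d = 0}
  add_mem' := by
    intro u v hu hv i d hd
    simp [HahnSeries.coeff_add, hu i d hd, hv i d hd]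
  zero_mem' := by intro i d _; rfl
  smul_mem' := by
    intro r v hv i d hd
    simp [HahnSeries.coeff_smul, hv i d hd]

/-- `V_b ⊆ K^m`: the `ℂ`-span of `z^{−b_1}e_1, …, z^{−b_m}e_m`, i.e. vectors whose `i`-th
coordinate is a scalar multiple of `z^{−b_i}`. -/
def Vb : Submodule ℂ (Km m) where
  carrier := {v | ∀ (i : Fin m) (d : ℤ), d ≠ -(b i : ℤ) → (v i).coeff d = 0}
  add_mem' := by
    intro u v hu hv i d hd
    simp [HahnSeries.coeff_add, hu i d hd, hv i d hd]
  zero_mem' := by intro i d _; rfl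
  smul_mem' := by
    intro r v hv i d hd
    simp [HahnSeries.coeff_smul, hv i d hd]

/-- `L_b^− ⊆ K^m`: vectors whose `i`-th coordinate lies in `z^{−b_i−1}·ℂ[z^{−1}]`. -/
def Lbminus : Submodule ℂ (Km m) where
  carrier := {v | ∀ (i : Fin m) (d : ℤ), -(b i : ℤ) ≤ d → (v i).coeff d = 0}
  add_mem' := by
    intro u v hu hv i d hd
    simp [HahnSeries.coeff_add, hu i d hd, hv i d hd]
  zero_mem' := by intro i d _; rfl
  smul_mem' := by
    intro r v hv i d hd
    simp [HahnSeries.coeff_smul, hv i d hd]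

/-- Truncation of a Laurent series to degrees `≥ c`. -/
def trunc (c : ℤ) (f : K) : K where
  coeff := fun d => if c ≤ d then f.coeff d else 0
  isPWO_support' := f.isPWO_support'.mono (by
    intro d hd
    simp only [Function.mem_support] at hd ⊢
    intro h0
    apply hd
    rw [h0]
    simp)

/-- The projection `π_b : K^m → L_b` along `L_b^−` (coordinate-wise truncation to degrees
`≥ −b_i`). -/
def pib : Km m →ₗ[ℂ] Km m where
  toFun := fun v i => trunc (-(b i : ℤ)) (v i)
  map_add' := by
    intro u v
    funext i
    ext d
    by_cases h : -(b i : ℤ) ≤ d <;>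
      simp [trunc, HahnSeries.coeff_add, h]
  map_smul' := by
    intro r v
    funext i
    ext d
    by_cases h : -(b i : ℤ) ≤ d <;>
      simp [trunc, HahnSeries.coeff_smul, h]

lemma zK_mul_coeff (g : K) (d : ℤ) : (zK * g).coeff d = g.coeff (d - 1) := by
  have : (zK * g).coeff ((d - 1) + 1) = (1 : ℂ) * g.coeff (d - 1) :=
    HahnSeries.coeff_single_mul_add
  simpa using this

/-- Multiplication by `z` as a `ℂ`-linear endomorphism of `K^m`. -/
def zMul : Km m →ₗ[ℂ] Km m where
  toFun v := zK • v
  map_add' u v := by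
    funext i
    simp only [Pi.smul_apply, Pi.add_apply, smul_eq_mul]
    ring
  map_smul' r v := by
    funext i
    ext d
    simp only [Pi.smul_apply, RingHom.id_apply, smul_eq_mul, zK_mul_coeff,
      HahnSeries.coeff_smul]

/-- A concrete model for `D = L_b/L_0`: the coordinates are indexed by the basis vectors
`z^{−(k+1)} e_i` (`i : Fin m`, `k : Fin (b i)`). -/
abbrev Dspace : Type := ((i : Fin m) × Fin (b i)) → ℂ

/-- The map `K^m → D` reading off the coefficients in the window `−b_i ≤ d ≤ −1` of each
coordinate.  On `L_b` it is the quotient map `L_b → L_b/L_0 = D`; in general it sends `v`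
to the class of `π_b(v)`. -/
def toD : Km m →ₗ[ℂ] Dspace m b where
  toFun := fun v p => (v p.1).coeff (-(p.2 : ℤ) - 1)
  map_add' := by
    intro u v
    funext p
    simp [HahnSeries.coeff_add]
  map_smul' := by
    intro r v
    funext p
    simp [HahnSeries.coeff_smul]

/-- The endomorphism `z̄` of `D = L_b/L_0` induced by multiplication by `z`. -/
def zbar : Module.End ℂ (Dspace m b) where
  toFun := fun u p => if h : (p.2 : ℕ) + 1 < b p.1 then u ⟨p.1, ⟨(p.2 : ℕ) + 1, h⟩⟩ else 0
  map_add' := by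
    intro u v
    funext p
    by_cases h : (p.2 : ℕ) + 1 < b p.1 <;> simp [h]
  map_smul' := by
    intro r v
    funext p
    by_cases h : (p.2 : ℕ) + 1 < b p.1 <;> simp [h]

/-- `f̂_1 : D → D`, induced by a linear map `f_1 : D → V_b ⊆ K^m` (composition of `f_1`
with the identification of `V_b` with a subspace of `D`, implemented by `toD`). -/
def fhat (f1 : Dspace m b →ₗ[ℂ] Km m) : Module.End ℂ (Dspace m b) :=
  (toD m b) ∘ₗ f1

/-! ### Auxiliary lemmas -/

section Aux
variable {m : ℕ} {b : Fin m → ℕ}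

lemma mem_L0_iff {v : Km m} :
    v ∈ L0 m ↔ ∀ (i : Fin m) (d : ℤ), d < 0 → (v i).coeff d = 0 := Iff.rfl

lemma mem_Lb_iff {v : Km m} :
    v ∈ Lb m b ↔ ∀ (i : Fin m) (d : ℤ), d < -(b i : ℤ) → (v i).coeff d = 0 := Iff.rfl

lemma mem_Vb_iff {v : Km m} :
    v ∈ Vb m b ↔ ∀ (i : Fin m) (d : ℤ), d ≠ -(b i : ℤ) → (v i).coeff d = 0 := Iff.rfl

lemma mem_Lbminus_iff {v : Km m} :
    v ∈ Lbminus m b ↔ ∀ (i : Fin m) (d : ℤ), -(b i : ℤ) ≤ d → (v i).coeff d = 0 := Iff.rfl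

lemma pib_coeff (v : Km m) (i : Fin m) (d : ℤ) :
    (pib m b v i).coeff d = if -(b i : ℤ) ≤ d then (v i).coeff d else 0 := rfl

lemma L0_le_Lb : L0 m ≤ Lb m b := by
  intro v hv i d hd
  exact mem_L0_iff.mp hv i d (by omega)

lemma pib_eq_self {v : Km m} (hv : v ∈ Lb m b) : pib m b v = v := by
  funext i; ext d
  rw [pib_coeff]
  split_ifs with h
  · rfl
  · exact (mem_Lb_iff.mp hv i d (by omega)).symm

lemma pib_mem_Lb (v : Km m) : pib m b v ∈ Lb m b := by
  intro i d hd
  rw [pib_coeff, if_neg (by omega)]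

lemma mem_Lbminus_of_pib_eq_zero {v : Km m} (h : pib m b v = 0) : v ∈ Lbminus m b := by
  intro i d hd
  have := congrFun h i
  have h2 := congrArg (fun g => HahnSeries.coeff g d) this
  simpa [pib_coeff, hd] using h2

lemma pib_eq_zero_of_mem_Lbminus {v : Km m} (h : v ∈ Lbminus m b) : pib m b v = 0 := by
  funext i; ext d
  rw [pib_coeff]
  split_ifs with hd
  · exact mem_Lbminus_iff.mp h i d hd
  · rfl

lemma toD_apply (v : Km m) (p : (i : Fin m) × Fin (b i)) :
    toD m b v p = (v p.1).coeff (-(p.2 : ℤ) - 1) := rfl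

lemma toD_pib (v : Km m) : toD m b (pib m b v) = toD m b v := by
  funext p
  rw [toD_apply, toD_apply, pib_coeff, if_pos (by have := p.2.2; omega)]

lemma toD_eq_zero_of_mem_Lbminus {v : Km m} (h : v ∈ Lbminus m b) : toD m b v = 0 := by
  funext p
  rw [toD_apply]
  exact mem_Lbminus_iff.mp h p.1 _ (by have := p.2.2; omega)

lemma toD_eq_zero_of_mem_L0 {v : Km m} (h : v ∈ L0 m) : toD m b v = 0 := by
  funext p
  rw [toD_apply]
  exact mem_L0_iff.mp h p.1 _ (by have := p.2.2; omega)

lemma mem_L0_of_mem_Lb_of_toD_eq_zero {v : Km m} (hv : v ∈ Lb m b)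
    (h : toD m b v = 0) : v ∈ L0 m := by
  intro i d hd
  by_cases hbd : d < -(b i : ℤ)
  · exact mem_Lb_iff.mp hv i d hbd
  · have hk : (-d - 1).toNat < b i := by omega
    have h2 := congrFun h ⟨i, ⟨(-d - 1).toNat, hk⟩⟩
    rw [toD_apply] at h2
    simp only [Fin.val_mk, Pi.zero_apply] at h2
    rw [show d = -(((-d - 1).toNat : ℕ) : ℤ) - 1 from by omega]
    exact h2

lemma zMul_apply (v : Km m) (i : Fin m) : zMul m v i = zK * v i := rfl

lemma zMul_coeff (v : Km m) (i : Fin m) (d : ℤ) :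
    (zMul m v i).coeff d = (v i).coeff (d - 1) := by
  rw [zMul_apply, zK_mul_coeff]

lemma zMul_mem_Lb {u : Km m} (hu : u ∈ Lb m b) : zMul m u ∈ Lb m b := by
  intro i d hd
  rw [zMul_coeff]
  exact mem_Lb_iff.mp hu i (d - 1) (by omega)

lemma toD_zMul_of_mem_Lb {u : Km m} (hu : u ∈ Lb m b) :
    toD m b (zMul m u) = zbar m b (toD m b u) := by
  funext p
  rw [toD_apply, zMul_coeff]
  show _ = (if h : (p.2 : ℕ) + 1 < b p.1 then toD m b u ⟨p.1, ⟨(p.2 : ℕ) + 1, h⟩⟩ else 0)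
  split_ifs with h
  · rw [toD_apply]
    congr 1
    push_cast
    ring
  · have := p.2.2
    exact mem_Lb_iff.mp hu p.1 _ (by omega)

/-- A linear section of `toD` landing in `Lb`. -/
def sec : Dspace m b →ₗ[ℂ] Km m where
  toFun w i :=
    { coeff := fun d =>
        if h : 0 ≤ -d - 1 ∧ (-d - 1).toNat < b i then w ⟨i, ⟨(-d - 1).toNat, h.2⟩⟩ else 0
      isPWO_support' := ((Set.finite_Icc (-(b i : ℤ)) (-1)).isPWO).mono (by
        intro d hd
        simp only [Function.mem_support] at hd
        by_contra hmem
        apply hd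
        rw [dif_neg]
        intro h
        exact hmem (Set.mem_Icc.mpr (by omega)) ) }
  map_add' u v := by
    funext i; ext d
    simp only [Pi.add_apply, HahnSeries.coeff_add]
    show dite _ _ _ = dite _ _ _ + dite _ _ _
    by_cases h : 0 ≤ -d - 1 ∧ (-d - 1).toNat < b i
    · simp only [dif_pos h]; try rfl
    · simp only [dif_neg h]; try ring
  map_smul' r v := by
    funext i; ext d
    simp only [RingHom.id_apply, Pi.smul_apply, HahnSeries.coeff_smul]
    show dite _ _ _ = r • dite _ _ _
    by_cases h : 0 ≤ -d - 1 ∧ (-d - 1).toNat < b i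
    · simp only [dif_pos h]; try rfl
    · simp only [dif_neg h]; try simp

lemma sec_coeff (w : Dspace m b) (i : Fin m) (d : ℤ) :
    ((sec w) i).coeff d =
      if h : 0 ≤ -d - 1 ∧ (-d - 1).toNat < b i then w ⟨i, ⟨(-d - 1).toNat, h.2⟩⟩ else 0 := rfl

lemma sec_mem_Lb (w : Dspace m b) : sec w ∈ Lb m b := by
  intro i d hd
  rw [sec_coeff, dif_neg (by omega)]

lemma toD_sec (w : Dspace m b) : toD m b (sec w) = w := by
  funext p
  rcases p with ⟨i, k⟩
  have hk : k.val < b i := k.2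
  rw [toD_apply, sec_coeff, dif_pos (by constructor <;> omega)]
  have hfin : (⟨(-(-(k.val : ℤ) - 1) - 1).toNat, by omega⟩ : Fin (b i)) = k :=
    Fin.ext (show ((-(-(k.val : ℤ) - 1) - 1).toNat : ℕ) = k.val from by omega)
  rw [hfin]

lemma sub_sec_toD_mem_L0 {u : Km m} (hu : u ∈ Lb m b) :
    u - sec (toD m b u) ∈ L0 m := by
  intro i d hd
  have : (u - sec (toD m b u)) i = u i - (sec (toD m b u)) i := rfl
  rw [this, HahnSeries.coeff_sub, sec_coeff]
  by_cases h : 0 ≤ -d - 1 ∧ (-d - 1).toNat < b i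
  · rw [dif_pos h, toD_apply]
    rw [show -((((-d - 1).toNat : ℕ)) : ℤ) - 1 = d by omega]
    ring
  · rw [dif_neg h]
    rw [mem_Lb_iff.mp hu i d (by omega)]
    ring

lemma Vb_ext {x y : Km m} (hx : x ∈ Vb m b) (hy : y ∈ Vb m b)
    (h : ∀ i : Fin m, (x i).coeff (-(b i : ℤ)) = (y i).coeff (-(b i : ℤ))) : x = y := by
  funext i; ext d
  by_cases hd : d = -(b i : ℤ)
  · rw [hd]; exact h i
  · rw [mem_Vb_iff.mp hx i d hd, mem_Vb_iff.mp hy i d hd]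

end Aux

/-- Let `U_b^N` be the set of lattices `L ⊆ K^m` with `L_0 ⊆ L`,
`dim_ℂ L/L_0 = N`, and such that `π_b` restricts to a bijection `L → L_b`.  Then every
`L ∈ U_b^N` has the form `L = (1 + f)(L_b)` for a unique `ℂ`-linear `f : L_b → L_b^−`
with `L_0 ⊆ ker f`; writing `f(u) = Σ_{k≥1} z^{−k} ι(f_k(ū))` for linear maps
`f_k : D → V_b`, one has (i) `f_k = f_1 ∘ (z̄ + f̂_1)^{k−1}`; (ii) `z̄ + f̂_1` is
nilpotent; (iii) the isomorphism `L/L_0 → D` induced by `π_b` intertwines multiplication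
by `z` with `z̄ + f̂_1`.

Encoding: `L` is a `ℂ`-subspace stable under multiplication by `z` and sandwiched between
`z^r O^m` and `z^{−r} O^m` (equivalent to being an `O`-lattice); `dim_ℂ L/L_0 = N` is
encoded by an `N`-dimensional complement `W` of `L_0` in `L`; a map `f : L_b → L_b^−`
killing `L_0` is encoded by the (unique) linear map `F : D = L_b/L_0 → L_b^−` with
`f = F ∘ (quotient map)`, the quotient map `L_b → D` being `toD`; the decomposition
`f(u) = Σ_{k≥1} z^{−k} ι(f_k(ū))` is encoded coefficient-wise (the `k`-th summand being
the part of degree `−b_i − k` in coordinate `i`); and (iii) is stated pointwise on `L`,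
the induced map `L/L_0 → D` being `v + L_0 ↦ toD v` (its bijectivity is the conjunction
of the last two clauses). -/
theorem stmt11 (N : ℕ) (hm : 1 ≤ m) (hb : ∀ i, 1 ≤ b i) (hN : N = ∑ i, b i)
    (L : Submodule ℂ (Km m))
    (hLz : ∀ v ∈ L, zMul m v ∈ L)
    (hLsand : ∃ r : ℕ, (∀ v ∈ L0 m, (zK ^ r) • v ∈ L) ∧ (∀ v ∈ L, (zK ^ r) • v ∈ L0 m))
    (hL0L : L0 m ≤ L)
    (hdim : ∃ W : Submodule ℂ (Km m), FiniteDimensional ℂ ↥W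
      ∧ Module.finrank ℂ ↥W = N ∧ W ⊓ L0 m = ⊥ ∧ L0 m ⊔ W = L)
    (hbij : Set.BijOn (pib m b) (L : Set (Km m)) ((Lb m b : Submodule ℂ (Km m)) : Set (Km m))) :
    (∃! F : Dspace m b →ₗ[ℂ] Km m,
      (∀ w, F w ∈ Lbminus m b) ∧
      (L : Set (Km m)) = (fun u => u + F (toD m b u)) '' ((Lb m b : Submodule ℂ (Km m)) : Set (Km m)))
    ∧ (∀ F : Dspace m b →ₗ[ℂ] Km m,
        (∀ w, F w ∈ Lbminus m b) →
        (L : Set (Km m)) = (fun u => u + F (toD m b u)) '' ((Lb m b : Submodule ℂ (Km m)) : Set (Km m)) →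
        ∀ fk : ℕ → (Dspace m b →ₗ[ℂ] Km m),
          (∀ k w, fk k w ∈ Vb m b) →
          (∀ (w : Dspace m b) (i : Fin m) (k : ℕ), 1 ≤ k →
            ((F w) i).coeff (-(b i : ℤ) - (k : ℤ)) = ((fk k w) i).coeff (-(b i : ℤ))) →
          ((∀ k : ℕ, 1 ≤ k →
              fk k = (fk 1) ∘ₗ
                (((zbar m b + fhat m b (fk 1)) ^ (k - 1) : Module.End ℂ (Dspace m b))
                  : Dspace m b →ₗ[ℂ] Dspace m b))
            ∧ IsNilpotent (zbar m b + fhat m b (fk 1))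
            ∧ (∀ v ∈ L, toD m b (zMul m v) = (zbar m b + fhat m b (fk 1)) (toD m b v))
            ∧ (∀ w : Dspace m b, ∃ v ∈ L, toD m b v = w)
            ∧ (∀ v ∈ L, toD m b v = 0 → v ∈ L0 m))) := by
  classical
  -- the restriction of `pib` to `L`, as a linear map into `Lb`
  have hPbijaux : True := trivial
  set P : ↥L →ₗ[ℂ] ↥(Lb m b) := (pib m b).restrict (fun v _ => pib_mem_Lb v) with hPdef
  have hPcoe : ∀ x : ↥L, (P x : Km m) = pib m b (x : Km m) := fun x => rfl
  have hPbij : Function.Bijective P := by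
    constructor
    · intro x y hxy
      apply Subtype.ext
      apply hbij.injOn x.2 y.2
      have := congrArg (Subtype.val) hxy
      simpa [hPcoe] using this
    · intro u
      obtain ⟨v, hv, hvu⟩ := hbij.surjOn u.2
      exact ⟨⟨v, hv⟩, Subtype.ext hvu⟩
  set e := LinearEquiv.ofBijective P hPbij with he
  set G : ↥(Lb m b) →ₗ[ℂ] Km m := L.subtype ∘ₗ e.symm.toLinearMap with hGdef
  have hG1 : ∀ u, G u ∈ L := fun u => (e.symm u).2
  have hGP : ∀ x : ↥L, G (P x) = (x : Km m) := by
    intro x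
    have h1 : e.symm (P x) = x := by
      have := e.symm_apply_apply x
      rwa [he, LinearEquiv.ofBijective_apply] at this
    show ((e.symm (P x) : ↥L) : Km m) = (x : Km m)
    rw [h1]
  have hG2 : ∀ u, pib m b (G u) = (u : Km m) := by
    intro u
    have h1 : e (e.symm u) = u := e.apply_symm_apply u
    have h2 : P (e.symm u) = u := by rwa [he, LinearEquiv.ofBijective_apply] at h1
    calc pib m b (G u) = (P (e.symm u) : Km m) := rfl
    _ = (u : Km m) := by rw [h2]
  have hG0 : ∀ v0 (h0 : v0 ∈ L0 m), G ⟨v0, L0_le_Lb h0⟩ = v0 := by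
    intro v0 h0
    have h1 : P ⟨v0, hL0L h0⟩ = ⟨v0, L0_le_Lb h0⟩ :=
      Subtype.ext (pib_eq_self (L0_le_Lb h0))
    rw [← h1, hGP]
  set F0 : Dspace m b →ₗ[ℂ] Km m :=
    (G - (Lb m b).subtype) ∘ₗ LinearMap.codRestrict (Lb m b) sec sec_mem_Lb with hF0def
  have hF0apply : ∀ w, F0 w = G ⟨sec w, sec_mem_Lb w⟩ - sec w := fun w => rfl
  have hfac : ∀ u (hu : u ∈ Lb m b), F0 (toD m b u) = G ⟨u, hu⟩ - u := by
    intro u hu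
    rw [hF0apply]
    have hdiff : u - sec (toD m b u) ∈ L0 m := sub_sec_toD_mem_L0 hu
    have h1 : G (⟨u, hu⟩ - ⟨sec (toD m b u), sec_mem_Lb _⟩) = u - sec (toD m b u) := by
      have heq : (⟨u, hu⟩ - ⟨sec (toD m b u), sec_mem_Lb _⟩ : ↥(Lb m b))
          = ⟨u - sec (toD m b u), L0_le_Lb hdiff⟩ := rfl
      rw [heq, hG0 _ hdiff]
    have h2 : G ⟨u, hu⟩ - G ⟨sec (toD m b u), sec_mem_Lb _⟩ = u - sec (toD m b u) := by
      rw [← map_sub]; exact h1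
    linear_combination -h2
  have hF0mem : ∀ w, F0 w ∈ Lbminus m b := by
    intro w
    apply mem_Lbminus_of_pib_eq_zero
    rw [hF0apply, map_sub, hG2, pib_eq_self (sec_mem_Lb w)]
    simp
  have hF0set : (L : Set (Km m))
      = (fun u => u + F0 (toD m b u)) '' ((Lb m b : Submodule ℂ (Km m)) : Set (Km m)) := by
    ext v
    constructor
    · intro hv
      refine ⟨pib m b v, pib_mem_Lb v, ?_⟩
      show pib m b v + F0 (toD m b (pib m b v)) = v
      rw [hfac _ (pib_mem_Lb v)]
      have h1 : (⟨pib m b v, pib_mem_Lb v⟩ : ↥(Lb m b)) = P ⟨v, hv⟩ := Subtype.ext rfl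
      rw [h1, hGP]
      show pib m b v + ((v : Km m) - pib m b v) = v
      ring
    · rintro ⟨u, hu, rfl⟩
      show u + F0 (toD m b u) ∈ L
      rw [hfac _ hu]
      have h1 : u + (G ⟨u, hu⟩ - u) = G ⟨u, hu⟩ := by ring
      rw [h1]
      exact hG1 _
  constructor
  · -- existence and uniqueness
    refine ⟨F0, ⟨hF0mem, hF0set⟩, ?_⟩
    rintro F' ⟨hF'1, hF'2⟩
    apply LinearMap.ext
    intro w
    have ha : sec w + F' w ∈ (L : Set (Km m)) := by
      rw [hF'2]
      refine ⟨sec w, sec_mem_Lb w, ?_⟩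
      show sec w + F' (toD m b (sec w)) = sec w + F' w
      rw [toD_sec]
    have hb' : sec w + F0 w ∈ (L : Set (Km m)) := by
      rw [hF0set]
      refine ⟨sec w, sec_mem_Lb w, ?_⟩
      show sec w + F0 (toD m b (sec w)) = sec w + F0 w
      rw [toD_sec]
    have hpi : pib m b (sec w + F' w) = pib m b (sec w + F0 w) := by
      rw [map_add, map_add, pib_eq_zero_of_mem_Lbminus (hF'1 w),
        pib_eq_zero_of_mem_Lbminus (hF0mem w)]
    have := hbij.injOn ha hb' hpi
    exact add_left_cancel this
  · -- part 2
    intro F hF1 hF2 fk hfk1 hfk2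
    set A : Module.End ℂ (Dspace m b) := zbar m b + fhat m b (fk 1) with hA
    have hAapply : ∀ w, A w = zbar m b w + toD m b (fk 1 w) := fun w => rfl
    have hImage : ∀ v ∈ L, ∃ u, u ∈ Lb m b ∧ v = u + F (toD m b u) := by
      intro v hv
      have hv' : v ∈ (fun u => u + F (toD m b u)) ''
          ((Lb m b : Submodule ℂ (Km m)) : Set (Km m)) := hF2 ▸ hv
      obtain ⟨u, hu, heq⟩ := hv'
      exact ⟨u, hu, heq.symm⟩
    have hMem : ∀ u ∈ Lb m b, u + F (toD m b u) ∈ L := by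
      intro u hu
      have : u + F (toD m b u) ∈ (L : Set (Km m)) := by
        rw [hF2]; exact ⟨u, hu, rfl⟩
      exact this
    have hP1 : ∀ w, pib m b (zMul m (F w)) = fk 1 w := by
      intro w
      funext i; ext d
      rw [pib_coeff]
      split_ifs with hd
      · rw [zMul_coeff]
        by_cases hdb : d = -(b i : ℤ)
        · subst hdb
          have h1 := hfk2 w i 1 le_rfl
          rwa [show (-(b i : ℤ) - ((1 : ℕ) : ℤ)) = -(b i : ℤ) - 1 from by norm_num] at h1
        · rw [mem_Lbminus_iff.mp (hF1 w) i (d - 1) (by omega),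
            mem_Vb_iff.mp (hfk1 1 w) i d hdb]
      · rw [mem_Vb_iff.mp (hfk1 1 w) i d (by omega)]
    have hIII : ∀ v ∈ L, toD m b (zMul m v) = A (toD m b v) := by
      intro v hv
      obtain ⟨u, hu, rfl⟩ := hImage v hv
      have hw : toD m b (u + F (toD m b u)) = toD m b u := by
        rw [map_add, toD_eq_zero_of_mem_Lbminus (hF1 _), add_zero]
      rw [hw, map_add, map_add, toD_zMul_of_mem_Lb hu]
      have h2 : toD m b (zMul m (F (toD m b u))) = toD m b (fk 1 (toD m b u)) := by
        rw [← toD_pib (zMul m (F (toD m b u))), hP1]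
      rw [h2, hAapply]
    have hsurj : ∀ w : Dspace m b, ∃ v ∈ L, toD m b v = w := by
      intro w
      refine ⟨sec w + F (toD m b (sec w)), hMem _ (sec_mem_Lb w), ?_⟩
      rw [map_add, toD_sec, toD_eq_zero_of_mem_Lbminus (hF1 _), add_zero]
    have hker : ∀ v ∈ L, toD m b v = 0 → v ∈ L0 m := by
      intro v hv h0
      obtain ⟨u, hu, rfl⟩ := hImage v hv
      have htu : toD m b u = 0 := by
        rwa [map_add, toD_eq_zero_of_mem_Lbminus (hF1 _), add_zero] at h0
      rw [htu, map_zero, add_zero]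
      exact mem_L0_of_mem_Lb_of_toD_eq_zero hu htu
    have hpow : ∀ n : ℕ, ∀ v ∈ L,
        (zK ^ n) • v ∈ L ∧ toD m b ((zK ^ n) • v) = (A ^ n) (toD m b v) := by
      intro n
      induction n with
      | zero =>
        intro v hv
        refine ⟨by simpa using hv, ?_⟩
        rw [pow_zero, one_smul, pow_zero]
        try rfl
      | succ n ih =>
        intro v hv
        have hz : zMul m v ∈ L := hLz v hv
        have heq : (zK ^ (n + 1)) • v = (zK ^ n) • (zMul m v) := by
          funext i
          show zK ^ (n + 1) * v i = zK ^ n * (zK * v i)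
          rw [pow_succ, mul_assoc]
        obtain ⟨ih1, ih2⟩ := ih (zMul m v) hz
        refine ⟨by rw [heq]; exact ih1, ?_⟩
        rw [heq, ih2, hIII v hv, pow_succ, Module.End.mul_apply]
    have hnil : IsNilpotent A := by
      obtain ⟨r, hr1, hr2⟩ := hLsand
      refine ⟨r, ?_⟩
      apply LinearMap.ext
      intro w
      obtain ⟨v, hv, rfl⟩ := hsurj w
      have h1 := (hpow r v hv).2
      rw [← h1, toD_eq_zero_of_mem_L0 (hr2 v hv), LinearMap.zero_apply]
    have hkey : ∀ w, F (A w) = zMul m (F w) - fk 1 w := by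
      intro w
      have hu : sec w ∈ Lb m b := sec_mem_Lb w
      have hvL : sec w + F w ∈ L := by
        have := hMem (sec w) hu; rwa [toD_sec] at this
      have hzv : zMul m (sec w + F w) ∈ L := hLz _ hvL
      obtain ⟨u₂, hu₂, heq⟩ := hImage _ hzv
      have hpi : pib m b (zMul m (sec w + F w)) = u₂ := by
        rw [heq, map_add, pib_eq_self hu₂, pib_eq_zero_of_mem_Lbminus (hF1 _), add_zero]
      have htd : toD m b u₂ = A w := by
        rw [← hpi, toD_pib, hIII _ hvL]
        congr 1
        rw [map_add, toD_sec, toD_eq_zero_of_mem_Lbminus (hF1 w), add_zero]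
      have hF2' : F (A w) = zMul m (sec w + F w) - u₂ := by
        rw [← htd]
        linear_combination -heq
      rw [hF2', ← hpi]
      have e1 : zMul m (sec w + F w) = zMul m (sec w) + zMul m (F w) := map_add _ _ _
      rw [e1, map_add, pib_eq_self (zMul_mem_Lb hu), hP1]
      ring
    have hstep : ∀ k : ℕ, 1 ≤ k → ∀ w, fk (k + 1) w = fk k (A w) := by
      intro k hk w
      apply Vb_ext (hfk1 _ _) (hfk1 _ _)
      intro i
      have l1 := hfk2 w i (k + 1) (by omega)
      have l2 := hfk2 (A w) i k hk
      rw [← l1, ← l2, hkey w, Pi.sub_apply, HahnSeries.coeff_sub, zMul_coeff,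
        mem_Vb_iff.mp (hfk1 1 w) i _ (by omega), sub_zero]
      congr 1
      push_cast
      ring
    have hmain : ∀ j : ℕ, fk (j + 1) = (fk 1) ∘ₗ
        ((A ^ j : Module.End ℂ (Dspace m b)) : Dspace m b →ₗ[ℂ] Dspace m b) := by
      intro j
      induction j with
      | zero =>
        apply LinearMap.ext
        intro w
        simp [pow_zero]
      | succ j ih =>
        apply LinearMap.ext
        intro w
        rw [hstep (j + 1) (by omega) w, ih]
        show (fk 1) ((A ^ j) (A w)) = (fk 1) ((A ^ (j + 1)) w)
        congr 1
        try rw [pow_succ]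
        try rw [Module.End.mul_apply]
    refine ⟨?_, hnil, hIII, hsurj, hker⟩
    intro k hk
    have h1 := hmain (k - 1)
    rwa [Nat.sub_add_cancel hk] at h1

end

end GrassA
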